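/- Let A be an N×N real symmetric matrix with A_{ij} = 0 whenever |i−j| ≠ 1, and suppose the matrix Γ = I + A is positive semidefinite. Then the squared Frobenius norm satisfies ‖A‖_F² = Σ_{i,j} A_{ij}² ≤ N, and if N is odd then ‖A‖_F² ≤ N − 1. Consequently the superradiance condition ‖A‖_F > √N can never hold for a physically valid (positive semidefinite) nearest-neighbor decoherence matrix. -/

import Mathlib

open Matrix in

/-- If `A` is symmetric tridiagonal with zero main diagonal and
`Γ = I + A` is positive semidefinite, then `‖A‖_F² = Σ_{i,j} A_{ij}² ≤ N` (and
`≤ N − 1` for odd `N`); hence the superradiance condition `‖A‖_F > √N` can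
never hold for a physically valid nearest-neighbor decoherence matrix. -/
theorem no_superradiance_nearest_neighbor_chain (N : ℕ)
    (A : Matrix (Fin N) (Fin N) ℝ) (hsymm : A.IsSymm)
    (hband : ∀ i j : Fin N, ((i.val : ℤ) - (j.val : ℤ)).natAbs ≠ 1 → A i j = 0)
    (hpsd : (1 + A).PosSemidef) :
    (∑ i : Fin N, ∑ j : Fin N, (A i j) ^ 2 ≤ (N : ℝ)) ∧
    (Odd N → ∑ i : Fin N, ∑ j : Fin N, (A i j) ^ 2 ≤ (N : ℝ) - 1) ∧
    ¬ (Real.sqrt (N : ℝ) < Real.sqrt (∑ i : Fin N, ∑ j : Fin N, (A i j) ^ 2)) := by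
  classical
  have hsymm' : ∀ i j : Fin N, A j i = A i j := fun i j => hsymm.apply i j
  have hAH : Aᴴ = A := by
    ext i j
    simp [Matrix.conjTranspose_apply, hsymm' i j]
  -- the alternating sign diagonal matrix
  set D : Matrix (Fin N) (Fin N) ℝ :=
    Matrix.diagonal (fun i : Fin N => (-1 : ℝ) ^ (i : ℕ)) with hD
  have hDD : D * D = 1 := by
    rw [hD, Matrix.diagonal_mul_diagonal]
    have h1 : (fun i : Fin N => (-1 : ℝ) ^ (i : ℕ) * (-1 : ℝ) ^ (i : ℕ)) = fun _ => (1 : ℝ) := by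
      funext i
      rw [← pow_add]
      exact Even.neg_one_pow ⟨(i : ℕ), rfl⟩
    rw [h1, Matrix.diagonal_one]
  have hDH : Dᴴ = D := by
    rw [hD, Matrix.diagonal_conjTranspose]
    congr 1
  have hDAD : D * A * D = -A := by
    ext i j
    rw [hD, Matrix.mul_diagonal, Matrix.diagonal_mul, Matrix.neg_apply]
    by_cases h : ((i.val : ℤ) - (j.val : ℤ)).natAbs = 1
    · have hij : (i : ℕ) + 1 = (j : ℕ) ∨ (j : ℕ) + 1 = (i : ℕ) := by omega
      have hsign : (-1 : ℝ) ^ (i : ℕ) * (-1 : ℝ) ^ (j : ℕ) = -1 := by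
        rw [← pow_add]
        rcases hij with h1 | h1
        · exact Odd.neg_one_pow ⟨(i : ℕ), by omega⟩
        · exact Odd.neg_one_pow ⟨(j : ℕ), by omega⟩
      calc (-1 : ℝ) ^ (i : ℕ) * A i j * (-1 : ℝ) ^ (j : ℕ)
          = ((-1 : ℝ) ^ (i : ℕ) * (-1 : ℝ) ^ (j : ℕ)) * A i j := by ring
        _ = -A i j := by rw [hsign]; ring
    · rw [hband i j h]; ring
  -- 1 - A is also PSD
  have hpsd' : (1 - A).PosSemidef := by
    have h := hpsd.mul_mul_conjTranspose_same D
    have heq : D * (1 + A) * Dᴴ = 1 - A := by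
      rw [hDH, mul_add, mul_one, add_mul, hDD, hDAD, sub_eq_add_neg]
    rwa [heq] at h
  have hPH : (1 + A)ᴴ = 1 + A := hpsd.1
  have hQH : (1 - A)ᴴ = 1 - A := hpsd'.1
  -- 1 - A*A is PSD
  have h1 := hpsd'.mul_mul_conjTranspose_same (1 + A)
  have h2 := hpsd.mul_mul_conjTranspose_same (1 - A)
  rw [hPH] at h1
  rw [hQH] at h2
  have hsum := h1.add h2
  have hiden : (1 + A) * (1 - A) * (1 + A) + (1 - A) * (1 + A) * (1 - A)
      = (1 - A * A) + (1 - A * A) := by noncomm_ring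
  rw [hiden] at hsum
  have hM : (1 - A * A).PosSemidef := by
    refine ⟨?_, fun x => ?_⟩
    · show (1 - A * A)ᴴ = 1 - A * A
      rw [Matrix.conjTranspose_sub, Matrix.conjTranspose_mul, hAH, Matrix.conjTranspose_one]
    · have hq := hsum.2 x
      simp only [Matrix.add_apply, mul_add, add_mul, Finsupp.sum_add] at hq
      linarith [hq]
  -- diagonal entries of a PSD matrix are nonnegative
  have hdiagM : ∀ (M : Matrix (Fin N) (Fin N) ℝ), M.PosSemidef → ∀ i, 0 ≤ M i i := by
    intro M hMp i
    have := hMp.2 (Finsupp.single i 1)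
    simpa [Finsupp.sum_single_index] using this
  -- trace computations
  have htrace_eq : ∑ i : Fin N, ∑ j : Fin N, (A i j) ^ 2 = ∑ i : Fin N, (A * A) i i := by
    refine Finset.sum_congr rfl fun i _ => ?_
    rw [Matrix.mul_apply]
    refine Finset.sum_congr rfl fun j _ => ?_
    rw [sq, hsymm' i j]
  have htrM : ∑ i : Fin N, (1 - A * A) i i = (N : ℝ) - ∑ i : Fin N, (A * A) i i := by
    have he : ∀ i : Fin N, (1 - A * A) i i = 1 - (A * A) i i := fun i => by
      simp [Matrix.sub_apply, Matrix.one_apply]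
    simp only [he, Finset.sum_sub_distrib]
    congr 1
    simp
  have htr_nonneg : (0 : ℝ) ≤ (N : ℝ) - ∑ i : Fin N, (A * A) i i := by
    rw [← htrM]
    exact Finset.sum_nonneg fun i _ => hdiagM _ hM i
  have part1 : ∑ i : Fin N, ∑ j : Fin N, (A i j) ^ 2 ≤ (N : ℝ) := by
    rw [htrace_eq]; linarith
  refine ⟨part1, ?_, not_lt.2 (Real.sqrt_le_sqrt part1)⟩
  -- odd case
  intro hodd
  have hdet : A.det = 0 := by
    have hd1 : (D * A * D).det = A.det := by
      rw [Matrix.det_mul, Matrix.det_mul]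
      have hdd : D.det * D.det = 1 := by rw [← Matrix.det_mul, hDD, Matrix.det_one]
      calc D.det * A.det * D.det = (D.det * D.det) * A.det := by ring
        _ = A.det := by rw [hdd, one_mul]
    rw [hDAD, Matrix.det_neg, Fintype.card_fin, hodd.neg_one_pow] at hd1
    linarith
  obtain ⟨v, hv0, hAv⟩ := (Matrix.exists_mulVec_eq_zero_iff).2 hdet
  have hMv : (1 - A * A) *ᵥ v = v := by
    rw [Matrix.sub_mulVec, Matrix.one_mulVec, ← Matrix.mulVec_mulVec, hAv, Matrix.mulVec_zero,
      sub_zero]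
  -- square root of 1 - A*A
  set B : Matrix (Fin N) (Fin N) ℝ := (open scoped MatrixOrder in CFC.sqrt (1 - A * A)) with hB
  have hBpsd : B.PosSemidef := open scoped MatrixOrder in (CFC.sqrt_nonneg (1 - A * A)).posSemidef
  have hBB : B * B = 1 - A * A := open scoped MatrixOrder in CFC.sqrt_mul_sqrt_self (1 - A * A) hM.nonneg
  have hBsymm : ∀ i j, B j i = B i j := by
    intro i j
    have hh : Bᴴ = B := hBpsd.1
    calc B j i = Bᴴ i j := by simp [Matrix.conjTranspose_apply]
      _ = B i j := by rw [hh]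
  have hBT : Bᵀ = B := by
    ext i j
    exact hBsymm i j
  set w : Fin N → ℝ := B *ᵥ v with hw
  have hBw : B *ᵥ w = v := by rw [hw, Matrix.mulVec_mulVec, hBB, hMv]
  have hw2 : ∑ i : Fin N, (w i) ^ 2 = ∑ i : Fin N, (v i) ^ 2 := by
    have h1 : w ⬝ᵥ w = v ⬝ᵥ v := by
      calc w ⬝ᵥ w = w ⬝ᵥ (B *ᵥ v) := by rw [← hw]
        _ = (w ᵥ* B) ⬝ᵥ v := Matrix.dotProduct_mulVec w B v
        _ = (Bᵀ *ᵥ w) ⬝ᵥ v := by rw [Matrix.mulVec_transpose]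
        _ = (B *ᵥ w) ⬝ᵥ v := by rw [hBT]
        _ = v ⬝ᵥ v := by rw [hBw]
    simpa [dotProduct, sq] using h1
  have hCS : ∑ i : Fin N, (w i) ^ 2 ≤
      (∑ i : Fin N, ∑ j : Fin N, (B i j) ^ 2) * ∑ i : Fin N, (v i) ^ 2 := by
    rw [Finset.sum_mul]
    refine Finset.sum_le_sum fun i _ => ?_
    calc (w i) ^ 2 = (∑ j : Fin N, B i j * v j) ^ 2 := by rw [hw]; rfl
      _ ≤ (∑ j : Fin N, (B i j) ^ 2) * ∑ j : Fin N, (v j) ^ 2 :=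
        Finset.sum_mul_sq_le_sq_mul_sq Finset.univ (fun j => B i j) v
  have htrB : ∑ i : Fin N, ∑ j : Fin N, (B i j) ^ 2 = ∑ i : Fin N, (1 - A * A) i i := by
    rw [← hBB]
    refine Finset.sum_congr rfl fun i _ => ?_
    rw [Matrix.mul_apply]
    exact Finset.sum_congr rfl fun j _ => by rw [sq, hBsymm i j]
  have hvpos : 0 < ∑ i : Fin N, (v i) ^ 2 := by
    obtain ⟨i, hi⟩ := Function.ne_iff.1 hv0
    have hi' : v i ≠ 0 := by simpa using hi
    refine Finset.sum_pos' (fun j _ => sq_nonneg _) ⟨i, Finset.mem_univ i, ?_⟩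
    positivity
  have hge1 : (1 : ℝ) ≤ ∑ i : Fin N, (1 - A * A) i i := by
    rw [← htrB]
    nlinarith [hw2, hCS, hvpos]
  rw [htrace_eq]
  rw [htrM] at hge1
  linarith
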